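/- Let (α_1,u_1) < ⋯ < (α_n,u_n) be a strictly increasing sequence of bypasses in Q, let τ_1,…,τ_n ∈ k^*, and set ψ := φ_{α_n,u_n,τ_n} ∘ ⋯ ∘ φ_{α_1,u_1,τ_1}. Then for every arrow α of Q, ψ(α) = α + Σ_{i such that α_i = α} τ_i u_i, and this expression is a normal form: the paths u_i with α_i = α are pairwise distinct and all distinct from α. -/

import Mathlib

attribute [local instance] Classical.propDecidable

/-- A quiver given by a set of vertices, a set of arrows and source/target maps. -/
structure Quiv where
  V : Type
  A : Type
  s : A → V
  t : A → V

namespace Quiv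

section Basic

variable (Q : Quiv)

/-- A (nontrivial) path is a nonempty list of composable arrows, listed in the
order they are traversed. -/
def IsPath (p : List Q.A) : Prop :=
  p ≠ [] ∧ p.Chain' (fun a b => Q.t a = Q.s b)

/-- Source of a nonempty list of arrows. -/
def src (p : List Q.A) : Option Q.V := p.head?.map Q.s

/-- Target of a nonempty list of arrows. -/
def tgt (p : List Q.A) : Option Q.V := p.getLast?.map Q.t

/-- `Q` has no oriented cycle: no nontrivial path has equal source and target. -/
def NoCycle : Prop := ∀ p, Q.IsPath p → Q.src p ≠ Q.tgt p

/-- `Q` has no multiple arrows: distinct arrows never have both the same source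
and the same target. -/
def NoMultipleArrows : Prop :=
  ∀ a b : Q.A, Q.s a = Q.s b → Q.t a = Q.t b → a = b

/-- A bypass `(α, u)`: `u` is a path parallel to the arrow `α` and distinct from it. -/
def IsBypass (α : Q.A) (u : List Q.A) : Prop :=
  Q.IsPath u ∧ Q.src u = some (Q.s α) ∧ Q.tgt u = some (Q.t α) ∧ u ≠ [α]

/-- `Repl n u v` : `v` is obtained from `u` by replacing `n` of its arrows (at
increasing positions) by bypass paths. -/
inductive Repl : ℕ → List Q.A → List Q.A → Prop
  | nil : Repl 0 [] []
  | keep (a : Q.A) {n : ℕ} {u v : List Q.A} : Repl n u v → Repl n (a :: u) (a :: v)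
  | repl {a : Q.A} {p : List Q.A} {n : ℕ} {u v : List Q.A} :
      Q.IsBypass a p → Repl n u v → Repl (n + 1) (a :: u) (p ++ v)

/-- `v` is derived of `u` of order `t`. -/
def DerivedOfOrder (t : ℕ) (u v : List Q.A) : Prop := 1 ≤ t ∧ Q.Repl t u v

/-- `v` is derived of `u` (of some order `t ≥ 1`). -/
def Derived (u v : List Q.A) : Prop := ∃ t, Q.DerivedOfOrder t u v

/-- `W(α)` : the number of bypasses of the form `(α, u)`. -/
noncomputable def Wa (α : Q.A) : ℕ := Nat.card {u : List Q.A // Q.IsBypass α u}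

/-- `W(u)` for a path `u = α_n ⋯ α_1` : the sum of the `W(α_i)`. -/
noncomputable def Wp (u : List Q.A) : ℕ := (u.map Q.Wa).sum

/-- A linear order `<` on the nontrivial paths of `Q` refining the `W`-ordering and
compatible with concatenation, as in Le Meur's Definition 2.5. -/
structure PathOrder where
  lt : List Q.A → List Q.A → Prop
  irrefl : ∀ p, Q.IsPath p → ¬ lt p p
  trans' : ∀ p q r, lt p q → lt q r → lt p r
  total' : ∀ p q, Q.IsPath p → Q.IsPath q → p ≠ q → lt p q ∨ lt q p
  wlt : ∀ p q, Q.IsPath p → Q.IsPath q → Q.Wp p < Q.Wp q → lt p q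
  concat : ∀ u u' v v' : List Q.A, lt v u → lt v' u' →
    Q.IsPath (v ++ v') → Q.IsPath (u ++ u') → lt (v ++ v') (u ++ u')

end Basic

/-- Lexicographic (strict) order on bypasses: `(α,u) < (β,v)` iff `α < β`, or
`α = β` and `u < v`. -/
def PathOrder.bplt {Q : Quiv} (o : Q.PathOrder) (b c : Q.A × List Q.A) : Prop :=
  o.lt [b.1] [c.1] ∨ (b.1 = c.1 ∧ o.lt b.2 c.2)

/-- Lexicographic non-strict order on bypasses. -/
def PathOrder.bple {Q : Quiv} (o : Q.PathOrder) (b c : Q.A × List Q.A) : Prop :=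
  o.bplt b c ∨ b = c

section Linear

variable (Q : Quiv) (k : Type) [Field k]

/-- Concatenation product on the free `k`-module on lists of arrows (the morphism
spaces of the path category `kQ`). -/
noncomputable def mulF (f g : List Q.A →₀ k) : List Q.A →₀ k :=
  f.sum fun p c => g.sum fun q d => Finsupp.single (p ++ q) (c * d)

/-- Image of the arrow `a` under the transvection `φ_{α,u,τ}`. -/
noncomputable def arrowImg (α : Q.A) (u : List Q.A) (τ : k) (a : Q.A) : List Q.A →₀ k :=
  if a = α then Finsupp.single [a] 1 + τ • Finsupp.single u 1 else Finsupp.single [a] 1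

/-- Image of a path under the transvection `φ_{α,u,τ}`. -/
noncomputable def substPoly (α : Q.A) (u : List Q.A) (τ : k) : List Q.A → (List Q.A →₀ k)
  | [] => Finsupp.single [] 1
  | a :: rest => mulF Q k (arrowImg Q k α u τ a) (substPoly α u τ rest)

/-- The transvection `φ_{α,u,τ}` as a linear endomorphism of `kQ` : it is the
`k`-linear automorphism of `kQ` fixing every vertex, sending `α` to `α + τ u`, and
fixing every other arrow. -/
noncomputable def substMap (α : Q.A) (u : List Q.A) (τ : k) :
    Module.End k (List Q.A →₀ k) :=
  Finsupp.linearCombination k (substPoly Q k α u τ)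

/-- `ψ` lies in the group `T` generated by the transvections, i.e. it is a finite
product of transvections. -/
def MemT (ψ : Module.End k (List Q.A →₀ k)) : Prop :=
  ∃ L : List (Q.A × List Q.A × k),
    (∀ x ∈ L, Q.IsBypass x.1 x.2.1) ∧
    ψ = (L.map fun x => substMap Q k x.1 x.2.1 x.2.2).prod

/-- `r'` is a subexpression of `r`. -/
def Subexpr (r' r : List Q.A →₀ k) : Prop :=
  r'.support ⊆ r.support ∧ ∀ p ∈ r'.support, r' p = r p

/-- A minimal relation of `I` : a nonzero `r ∈ I` such that `0` and `r` are the only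
subexpressions of `r` lying in `I`. -/
def IsMinimalRel (I : Submodule k (List Q.A →₀ k)) (r : List Q.A →₀ k) : Prop :=
  r ∈ I ∧ r ≠ 0 ∧ ∀ r', Subexpr Q k r' r → r' ∈ I → r' = 0 ∨ r' = r

/-- `ReplExp g u v c` : `v` is obtained from the path `u` by replacing some of its
arrows `a` (at increasing positions) by paths `w ∈ supp(g a)`, `w ≠ a`, and `c` is
the product of the corresponding coefficients `w^*(g a)`. -/
inductive ReplExp (g : Q.A → (List Q.A →₀ k)) : List Q.A → List Q.A → k → Prop
  | nil : ReplExp g [] [] 1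
  | keep (a : Q.A) {u v : List Q.A} {c : k} :
      ReplExp g u v c → ReplExp g (a :: u) (a :: v) c
  | repl (a : Q.A) {w u v : List Q.A} {c : k} :
      w ∈ (g a).support → w ≠ [a] → ReplExp g u v c →
      ReplExp g (a :: u) (w ++ v) ((g a) w * c)

/-- The homotopy relation `∼_I` on walks. A walk is a list of pairs `(a, d)` where
`a` is an arrow and `d` is `true` for `a` and `false` for the formal inverse `a⁻¹`;
the relation is the smallest equivalence relation compatible with concatenation,
cancelling `a a⁻¹` and `a⁻¹ a`, and identifying any two paths lying in the support
of a minimal relation of `I`. -/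
inductive Homotopic (I : Submodule k (List Q.A →₀ k)) :
    List (Q.A × Bool) → List (Q.A × Bool) → Prop
  | refl (w : List (Q.A × Bool)) : Homotopic I w w
  | symm {w w' : List (Q.A × Bool)} : Homotopic I w w' → Homotopic I w' w
  | trans {w w' w'' : List (Q.A × Bool)} :
      Homotopic I w w' → Homotopic I w' w'' → Homotopic I w w''
  | cancel (a : Q.A) : Homotopic I [(a, true), (a, false)] []
  | cancel' (a : Q.A) : Homotopic I [(a, false), (a, true)] []
  | rel {r : List Q.A →₀ k} (hr : IsMinimalRel Q k I r) {u v : List Q.A}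
      (hu : u ∈ r.support) (hv : v ∈ r.support) :
      Homotopic I (u.map fun a => (a, true)) (v.map fun a => (a, true))
  | congr (w x : List (Q.A × Bool)) {v v' : List (Q.A × Bool)} :
      Homotopic I v v' → Homotopic I (w ++ v ++ x) (w ++ v' ++ x)

/-- `I` is a monomial admissible ideal of `kQ` : every element is a combination of
paths of length `≥ 2`, membership is detected on supports (monomiality), and `I`
is stable under concatenation with paths on either side. -/
def IsMonomialAdmissible (I : Submodule k (List Q.A →₀ k)) : Prop :=
  (∀ r ∈ I, ∀ p ∈ (r : List Q.A →₀ k).support, Q.IsPath p ∧ 2 ≤ p.length) ∧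
  (∀ r : List Q.A →₀ k, (∀ p ∈ r.support, Finsupp.single p (1 : k) ∈ I) → r ∈ I) ∧
  (∀ r ∈ I, ∀ p ∈ (r : List Q.A →₀ k).support, Finsupp.single p (1 : k) ∈ I) ∧
  (∀ p q : List Q.A, Q.IsPath p → Finsupp.single q (1 : k) ∈ I → Q.IsPath (p ++ q) →
    Finsupp.single (p ++ q) (1 : k) ∈ I) ∧
  (∀ p q : List Q.A, Finsupp.single p (1 : k) ∈ I → Q.IsPath q → Q.IsPath (p ++ q) →
    Finsupp.single (p ++ q) (1 : k) ∈ I)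

/-- A `k`-linear automorphism of `kQ` (fixing the vertices) is the transvection
`φ_{α,u,τ}` when its underlying linear map is `substMap α u τ`. -/
def IsTransvectionE (ψ : (List Q.A →₀ k) ≃ₗ[k] (List Q.A →₀ k))
    (α : Q.A) (u : List Q.A) (τ : k) : Prop :=
  (ψ : (List Q.A →₀ k) →ₗ[k] (List Q.A →₀ k)) = substMap Q k α u τ

/-- The subgroup `T_{<(α,u)}` generated by the transvections `φ_{β,v,τ}` with
`(β,v) < (α,u)`. -/
noncomputable def TltSub (o : Q.PathOrder) (b : Q.A × List Q.A) :
    Subgroup ((List Q.A →₀ k) ≃ₗ[k] (List Q.A →₀ k)) :=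
  Subgroup.closure
    {ψ | ∃ β v τ, Q.IsBypass β v ∧ o.bplt (β, v) b ∧ IsTransvectionE Q k ψ β v τ}

/-- The subgroup `T_{≤(α,u)}` generated by the transvections `φ_{β,v,τ}` with
`(β,v) ≤ (α,u)`. -/
noncomputable def TleSub (o : Q.PathOrder) (b : Q.A × List Q.A) :
    Subgroup ((List Q.A →₀ k) ≃ₗ[k] (List Q.A →₀ k)) :=
  Subgroup.closure
    {ψ | ∃ β v τ, Q.IsBypass β v ∧ o.bple (β, v) b ∧ IsTransvectionE Q k ψ β v τ}

/-- The set `T_{(α,u)} = {φ_{α,u,τ} | τ ∈ k}`. -/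
def TsingleSet (b : Q.A × List Q.A) :
    Set ((List Q.A →₀ k) ≃ₗ[k] (List Q.A →₀ k)) :=
  {ψ | ∃ τ : k, IsTransvectionE Q k ψ b.1 b.2 τ}

/-- `m` is the `<`-maximum of the support of `r`. -/
def IsMaxPath (o : Q.PathOrder) (r : List Q.A →₀ k) (m : List Q.A) : Prop :=
  m ∈ r.support ∧ ∀ p ∈ r.support, p ≠ m → o.lt p m

/-- `B` is the Gröbner basis of the subspace `F` with respect to the path order `o` :
`B` spans `F` and each `r ∈ B` has a leading path `m` (with coefficient `1`, all other
paths of `supp r` being `<`-smaller) whose coefficient in every other element of `B`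
vanishes. -/
def IsGB (o : Q.PathOrder) (F : Submodule k (List Q.A →₀ k))
    (B : Set (List Q.A →₀ k)) : Prop :=
  B ⊆ (F : Set (List Q.A →₀ k)) ∧ Submodule.span k B = F ∧
  ∀ r ∈ B, ∃ m, m ∈ (r : List Q.A →₀ k).support ∧ r m = 1 ∧
    (∀ p ∈ (r : List Q.A →₀ k).support, p ≠ m → o.lt p m) ∧
    ∀ r' ∈ B, r' ≠ r → (r' : List Q.A →₀ k) m = 0

end Linear

section Aux

variable {Q : Quiv}

lemma isPath_single (a : Q.A) : Q.IsPath [a] := ⟨by simp, List.isChain_singleton a⟩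

lemma src_eq_some {p : List Q.A} (h : 0 < p.length) :
    Q.src p = some (Q.s (p[0]'h)) := by
  cases p with
  | nil => simp at h
  | cons b t => rfl

lemma tgt_eq_some {p : List Q.A} (h : 0 < p.length) :
    Q.tgt p = some (Q.t (p[p.length - 1]'(by omega))) := by
  have hne : p ≠ [] := List.ne_nil_of_length_pos h
  rw [Quiv.tgt, List.getLast?_eq_getLast hne, List.getLast_eq_getElem]
  rfl

lemma src_append {p q : List Q.A} (hp : p ≠ []) : Q.src (p ++ q) = Q.src p := by
  rw [Quiv.src, Quiv.src, List.head?_append_of_ne_nil _ hp]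

lemma tgt_append {p q : List Q.A} (hq : q ≠ []) : Q.tgt (p ++ q) = Q.tgt q := by
  rw [Quiv.tgt, Quiv.tgt, List.getLast?_append_of_ne_nil _ hq]

lemma tgt_cons {b : Q.A} {l : List Q.A} (hl : l ≠ []) : Q.tgt (b :: l) = Q.tgt l := by
  rw [show b :: l = [b] ++ l from rfl, tgt_append hl]

lemma isPath_append {p q : List Q.A} (hp : Q.IsPath p) (hq : Q.IsPath q)
    (h : Q.tgt p = Q.src q) : Q.IsPath (p ++ q) := by
  refine ⟨by simp [hp.1], List.IsChain.append hp.2 hq.2 ?_⟩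
  intro x hx y hy
  have h1 : Q.tgt p = some (Q.t x) := by
    rw [Quiv.tgt, Option.mem_def.1 hx]; rfl
  have h2 : Q.src q = some (Q.s y) := by
    rw [Quiv.src, Option.mem_def.1 hy]; rfl
  rw [h1, h2] at h
  exact Option.some_injective _ h

lemma path_step {p : List Q.A} (hp : Q.IsPath p) {i : ℕ} (h : i + 1 < p.length) :
    Q.t (p[i]'(by omega)) = Q.s (p[i+1]'h) := by
  have := List.isChain_iff_getElem.1 hp.2 i (by omega)
  simpa using this

lemma isPath_infix {p q : List Q.A} (hp : Q.IsPath p) (hq : q <:+: p) (hne : q ≠ []) :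
    Q.IsPath q := ⟨hne, hp.2.infix hq⟩

/-- In an acyclic quiver, the targets of the arrows along a path are pairwise
distinct. -/
lemma nodup_map_t (hnc : Q.NoCycle) {p : List Q.A} (hp : Q.IsPath p) :
    (p.map Q.t).Nodup := by
  rw [List.nodup_iff_injective_getElem]
  rintro ⟨i, hi⟩ ⟨j, hj⟩ hij
  simp only [List.length_map] at hi hj
  simp only [List.getElem_map] at hij
  rcases lt_trichotomy i j with h | h | h
  · exfalso
    exact absurd_of_lt hnc hp h hj hij
  · exact Fin.ext h
  · exfalso
    exact absurd_of_lt hnc hp h hi hij.symm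
where
  absurd_of_lt (hnc : Q.NoCycle) {p : List Q.A} (hp : Q.IsPath p) {i j : ℕ}
      (h : i < j) (hj : j < p.length) (hij : Q.t (p[i]'(by omega)) = Q.t (p[j]'hj)) :
      False := by
    set q : List Q.A := (p.drop (i+1)).take (j - i) with hqdef
    have hql : q.length = j - i := by
      simp [hqdef]; omega
    have hqne : q ≠ [] := by
      intro hq
      rw [hq] at hql; simp at hql; omega
    have hqpath : Q.IsPath q := ⟨hqne, (hp.2.drop (i+1)).take _⟩
    have hget : ∀ (m : ℕ) (hm : m < q.length), q[m]'hm = p[i+1+m]'(by omega) := by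
      intro m hm
      simp [hqdef]
    have hqpos : 0 < q.length := by rw [hql]; omega
    have hsrc : Q.src q = some (Q.t (p[i]'(by omega))) := by
      rw [src_eq_some (p := q) hqpos]
      simp only [hget]
      have := path_step (Q := Q) hp (i := i) (by omega)
      simp only [Nat.add_zero]
      exact congrArg some this.symm
    have htgt : Q.tgt q = some (Q.t (p[j]'hj)) := by
      rw [tgt_eq_some (p := q) hqpos]
      simp only [hget]
      have hidx : i + 1 + (q.length - 1) = j := by rw [hql]; omega
      simp only [hidx]
    exact hnc q hqpath (by rw [hsrc, htgt, hij])

lemma bypass_two_le (hnm : Q.NoMultipleArrows) {β : Q.A} {v : List Q.A}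
    (h : Q.IsBypass β v) : 2 ≤ v.length := by
  have h1 : 0 < v.length := List.length_pos_iff.2 h.1.1
  by_contra hlt
  have hv1 : v.length = 1 := by omega
  obtain ⟨b, rfl⟩ := List.length_eq_one_iff.1 hv1
  have hs : Q.s b = Q.s β := by
    have := h.2.1
    simpa [Quiv.src] using this
  have ht : Q.t b = Q.t β := by
    have := h.2.2.1
    simpa [Quiv.tgt] using this
  exact h.2.2.2 (by rw [hnm b β hs ht])

end Aux
section Aux2

variable {Q : Quiv}

/-- Replacing one arrow of a path by a parallel path yields a parallel path. -/
lemma replseg_spec :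
    ∀ (u : List Q.A) (i : ℕ) (v : List Q.A) (hi : i < u.length),
      Q.IsPath u → Q.IsPath v → Q.src v = some (Q.s (u[i]'hi)) →
      Q.tgt v = some (Q.t (u[i]'hi)) →
      Q.IsPath (u.take i ++ v ++ u.drop (i + 1)) ∧
      Q.src (u.take i ++ v ++ u.drop (i + 1)) = Q.src u ∧
      Q.tgt (u.take i ++ v ++ u.drop (i + 1)) = Q.tgt u := by
  intro u
  induction u with
  | nil => intro i v hi; simp at hi
  | cons b t ih =>
    intro i v hi hp hv hsrc htgt
    have hvne : v ≠ [] := hv.1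
    cases i with
    | zero =>
      simp only [List.take_zero, List.nil_append, List.drop_succ_cons, List.drop_zero]
      simp only [List.getElem_cons_zero] at hsrc htgt
      cases t with
      | nil =>
        simp only [List.append_nil]
        refine ⟨hv, ?_, ?_⟩
        · rw [hsrc]; rfl
        · rw [htgt]
          simp [Quiv.tgt]
      | cons c t' =>
        have htpath : Q.IsPath (c :: t') := ⟨by simp, hp.2.tail⟩
        have hbc : Q.t b = Q.s c := by
          have := path_step (Q := Q) hp (i := 0) (by simp)
          simpa using this
        refine ⟨isPath_append hv htpath ?_, ?_, ?_⟩
        · rw [htgt, src_eq_some (p := c :: t') (by simp)]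
          simp [hbc]
        · rw [src_append hvne, hsrc]; rfl
        · rw [tgt_append (by simp : (c :: t') ≠ [])]
          exact (tgt_cons (by simp)).symm
    | succ i =>
      have hit : i < t.length := by simpa using hi
      have htne : t ≠ [] := List.ne_nil_of_length_pos (by omega)
      have hgE : (b :: t)[i+1]'hi = t[i]'hit := List.getElem_cons_succ ..
      rw [hgE] at hsrc htgt
      obtain ⟨hE, hEsrc, hEtgt⟩ := ih i v hit ⟨htne, hp.2.tail⟩ hv hsrc htgt
      set E := t.take i ++ v ++ t.drop (i + 1) with hEdef
      have hEne : E ≠ [] := hE.1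
      have hexpr : (b :: t).take (i+1) ++ v ++ (b :: t).drop (i+1+1) = b :: E := by
        simp [hEdef, List.take_succ_cons, List.drop_succ_cons]
      rw [hexpr]
      refine ⟨⟨by simp, List.isChain_cons.2 ⟨?_, hE.2⟩⟩, ?_, ?_⟩
      · intro y hy
        have h1 : Q.src E = some (Q.s y) := by
          rw [Quiv.src, Option.mem_def.1 hy]; rfl
        rw [hEsrc, src_eq_some (p := t) (by omega)] at h1
        have h2 : Q.t b = Q.s (t[0]'(by omega)) := by
          have := path_step (Q := Q) hp (i := 0) (by simp; omega)
          simpa using this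
        rw [h2]
        exact Option.some_injective _ h1
      · rfl
      · rw [tgt_cons hEne, hEtgt, tgt_cons htne]

lemma replseg_length {u v : List Q.A} {i : ℕ} (hi : i < u.length) :
    (u.take i ++ v ++ u.drop (i + 1)).length = u.length - 1 + v.length := by
  simp [List.length_take, List.length_drop]
  omega

/-- The replaced path is a bypass of `α`, different from `u`. -/
lemma replseg_isBypass (hnm : Q.NoMultipleArrows) {α : Q.A} {u : List Q.A}
    (hu : Q.IsBypass α u) {i : ℕ} (hi : i < u.length) {v : List Q.A}
    (hv : Q.IsBypass (u[i]'hi) v) :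
    Q.IsBypass α (u.take i ++ v ++ u.drop (i + 1)) ∧
      u.take i ++ v ++ u.drop (i + 1) ≠ u := by
  obtain ⟨hP, hsrc, htgt⟩ :=
    replseg_spec u i v hi hu.1 hv.1 hv.2.1 hv.2.2.1
  have hv2 : 2 ≤ v.length := bypass_two_le hnm hv
  have hu1 : 0 < u.length := List.length_pos_iff.2 hu.1.1
  have hlen := replseg_length (u := u) (v := v) hi
  constructor
  · refine ⟨hP, hsrc.trans hu.2.1, htgt.trans hu.2.2.1, ?_⟩
    intro hcon
    apply_fun List.length at hcon
    rw [hlen] at hcon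
    simp at hcon
    omega
  · intro hcon
    apply_fun List.length at hcon
    rw [hlen] at hcon
    omega

/-- Two different single-arrow replacements in `u` give different paths. -/
lemma replseg_inj_lt (hnc : Q.NoCycle) (hnm : Q.NoMultipleArrows) {α : Q.A}
    {u : List Q.A} (hu : Q.IsBypass α u) {i i' : ℕ} (hii : i < i')
    (hi : i < u.length) (hi' : i' < u.length) {v v' : List Q.A}
    (hv : Q.IsBypass (u[i]'hi) v) (hv' : Q.IsBypass (u[i']'hi') v')
    (heq : u.take i ++ v ++ u.drop (i + 1) = u.take i' ++ v' ++ u.drop (i' + 1)) :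
    False := by
  have hlv : 2 ≤ v.length := bypass_two_le hnm hv
  have hlv' : 2 ≤ v'.length := bypass_two_le hnm hv'
  set r := u.take i ++ v ++ u.drop (i + 1) with hrdef
  have hP : Q.IsPath r :=
    (replseg_spec u i v hi hu.1 hv.1 hv.2.1 hv.2.2.1).1
  have hnd : (r.map Q.t).Nodup := nodup_map_t hnc hP
  have hrlen : r.length = u.length - 1 + v.length := replseg_length hi
  have hAlt : i < r.length := by omega
  have hBlt : i + v.length - 1 < r.length := by omega
  -- first computation : `r[i] = u[i]`, through the second decomposition
  have e1 : r[i]'hAlt = u[i]'hi := by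
    have hr2 : r = (u.take i' ++ v') ++ u.drop (i' + 1) := heq
    have hti' : (u.take i').length = i' := by simp; omega
    have h1 : i < (u.take i' ++ v').length := by simp; omega
    calc r[i]'hAlt = ((u.take i' ++ v') ++ u.drop (i' + 1))[i]'(by rw [← hr2]; exact hAlt) := by
          simp only [hr2]
      _ = (u.take i' ++ v')[i]'h1 := List.getElem_append_left h1
      _ = (u.take i')[i]'(by omega) := List.getElem_append_left (by omega)
      _ = u[i]'hi := by simp
  -- second computation : `r[i + v.length - 1]` is the last arrow of `v`
  have e2 : r[i + v.length - 1]'hBlt = v[v.length - 1]'(by omega) := by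
    have hti : (u.take i).length = i := by simp; omega
    have h1 : i + v.length - 1 < (u.take i ++ v).length := by simp; omega
    calc r[i + v.length - 1]'hBlt
        = (u.take i ++ v)[i + v.length - 1]'h1 := List.getElem_append_left h1
      _ = v[i + v.length - 1 - (u.take i).length]'(by simp; omega) :=
          List.getElem_append_right (by omega)
      _ = v[v.length - 1]'(by omega) := by
          have : i + v.length - 1 - (u.take i).length = v.length - 1 := by
            rw [hti]; omega
          simp only [this]
  have tv : Q.t (v[v.length - 1]'(by omega)) = Q.t (u[i]'hi) := by
    have h := hv.2.2.1
    rw [tgt_eq_some (p := v) (by omega)] at h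
    exact Option.some_injective _ h
  have hmapeq : (r.map Q.t)[i]'(by simp; omega) = (r.map Q.t)[i + v.length - 1]'(by simp; omega) := by
    simp only [List.getElem_map]
    rw [e1, e2, tv]
  have := hnd.getElem_inj_iff.1 hmapeq
  omega

lemma replseg_inj (hnc : Q.NoCycle) (hnm : Q.NoMultipleArrows) {α : Q.A}
    {u : List Q.A} (hu : Q.IsBypass α u) {i i' : ℕ}
    (hi : i < u.length) (hi' : i' < u.length) {v v' : List Q.A}
    (hv : Q.IsBypass (u[i]'hi) v) (hv' : Q.IsBypass (u[i']'hi') v')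
    (heq : u.take i ++ v ++ u.drop (i + 1) = u.take i' ++ v' ++ u.drop (i' + 1)) :
    i = i' ∧ v = v' := by
  rcases lt_trichotomy i i' with h | h | h
  · exact absurd heq (fun hc => replseg_inj_lt hnc hnm hu h hi hi' hv hv' hc)
  · subst h
    refine ⟨rfl, ?_⟩
    have h1 := List.append_cancel_right heq
    exact List.append_cancel_left h1
  · exact absurd heq.symm (fun hc => replseg_inj_lt hnc hnm hu h hi' hi hv' hv hc)

end Aux2
section Aux3

variable {Q : Quiv}

lemma paths_finite [Fintype Q.V] [Fintype Q.A] (hnc : Q.NoCycle) :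
    {p : List Q.A | Q.IsPath p}.Finite := by
  apply (List.finite_length_le Q.A (Fintype.card Q.V)).subset
  intro p hp
  have h1 : (p.map Q.t).Nodup := nodup_map_t hnc hp
  have h2 := h1.length_le_card
  simpa using h2

lemma sum_map_get {A : Type} (f : A → ℕ) :
    ∀ (l : List A), (l.map f).sum = ∑ i : Fin l.length, f (l.get i)
  | [] => by simp
  | b :: t => by
    have h := Fin.sum_univ_succ (f := fun i : Fin (t.length + 1) => f ((b :: t).get i))
    simp only [List.length_cons]
    rw [List.map_cons, List.sum_cons, sum_map_get f t, h]
    simp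

/-- Key lemma (Le Meur) : `W(u) < W(α)` for any bypass `(α, u)`. -/
lemma wp_lt_wa [Fintype Q.V] [Fintype Q.A] (hnc : Q.NoCycle)
    (hnm : Q.NoMultipleArrows) {α : Q.A} {u : List Q.A} (hu : Q.IsBypass α u) :
    Q.Wp u < Q.Wa α := by
  classical
  have hPfin : {p : List Q.A | Q.IsPath p}.Finite := paths_finite hnc
  have hfin : ∀ β : Q.A, Finite {v : List Q.A // Q.IsBypass β v} := fun β =>
    Set.Finite.to_subtype (hPfin.subset fun v hv => hv.1)
  haveI : ∀ i : Fin u.length, Fintype {v : List Q.A // Q.IsBypass (u.get i) v} := fun i =>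
    @Fintype.ofFinite _ (hfin _)
  haveI F1 : Fintype {w : List Q.A // Q.IsBypass α w} := @Fintype.ofFinite _ (hfin α)
  haveI F2 : Finite {w : List Q.A // Q.IsBypass α w ∧ w ≠ u} :=
    Set.Finite.to_subtype (hPfin.subset fun w hw => hw.1.1)
  haveI F2' : Fintype {w : List Q.A // Q.IsBypass α w ∧ w ≠ u} := Fintype.ofFinite _
  set G : (Σ i : Fin u.length, {v : List Q.A // Q.IsBypass (u.get i) v}) →
      {w : List Q.A // Q.IsBypass α w ∧ w ≠ u} := fun x =>
    ⟨u.take x.1.1 ++ x.2.1 ++ u.drop (x.1.1 + 1),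
      (replseg_isBypass hnm hu x.1.2 (by simpa [List.get_eq_getElem] using x.2.2)).1,
      (replseg_isBypass hnm hu x.1.2 (by simpa [List.get_eq_getElem] using x.2.2)).2⟩
    with hG
  have hGinj : Function.Injective G := by
    rintro ⟨⟨i, hi⟩, v, hv⟩ ⟨⟨i', hi'⟩, v', hv'⟩ h
    have hl : u.take i ++ v ++ u.drop (i + 1) = u.take i' ++ v' ++ u.drop (i' + 1) :=
      congrArg Subtype.val h
    obtain ⟨hii, hvv⟩ := replseg_inj hnc hnm hu hi hi'
      (by simpa [List.get_eq_getElem] using hv) (by simpa [List.get_eq_getElem] using hv') hl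
    subst hii
    subst hvv
    rfl
  have hsum : Q.Wp u = Fintype.card (Σ i : Fin u.length, {v : List Q.A // Q.IsBypass (u.get i) v}) := by
    rw [Fintype.card_sigma, Quiv.Wp, sum_map_get]
    congr 1
    funext i
    rw [Quiv.Wa, Nat.card_eq_fintype_card]
  have hstep1 : Q.Wp u ≤ Fintype.card {w : List Q.A // Q.IsBypass α w ∧ w ≠ u} := by
    rw [hsum]
    exact Fintype.card_le_of_injective G hGinj
  have hstep2 : Fintype.card {w : List Q.A // Q.IsBypass α w ∧ w ≠ u} <
      Fintype.card {w : List Q.A // Q.IsBypass α w} := by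
    apply Fintype.card_lt_of_injective_of_notMem
      (fun (w : {w : List Q.A // Q.IsBypass α w ∧ w ≠ u}) =>
        (⟨w.1, w.2.1⟩ : {w : List Q.A // Q.IsBypass α w}))
      (by intro x y hxy; exact Subtype.ext (by simpa using congrArg Subtype.val hxy))
      (b := ⟨u, hu⟩)
    rintro ⟨⟨w, hw1, hw2⟩, hweq⟩
    exact hw2 (congrArg Subtype.val hweq)
  have : Q.Wa α = Fintype.card {w : List Q.A // Q.IsBypass α w} := Nat.card_eq_fintype_card
  omega

/-- If `(α,u) < (β,v)` are bypasses then the arrow `β` does not occur in `u`. -/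
lemma key_notmem [Fintype Q.V] [Fintype Q.A] (hnc : Q.NoCycle)
    (hnm : Q.NoMultipleArrows) (o : Q.PathOrder) {α β : Q.A} {u v : List Q.A}
    (hu : Q.IsBypass α u) (hv : Q.IsBypass β v)
    (hlt : o.bplt (α, u) (β, v)) : β ∉ u := by
  intro hmem
  have h1 : Q.Wa β ≤ Q.Wp u :=
    List.single_le_sum (fun x _ => Nat.zero_le x) _ (List.mem_map_of_mem (f := Q.Wa) hmem)
  have h2 : Q.Wp u < Q.Wa α := wp_lt_wa hnc hnm hu
  have h3 : Q.Wa β < Q.Wa α := lt_of_le_of_lt h1 h2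
  rcases hlt with h | ⟨he, _⟩
  · have hba : o.lt [β] [α] := by
      apply o.wlt _ _ (isPath_single β) (isPath_single α)
      simpa [Quiv.Wp] using h3
    exact o.irrefl [α] (isPath_single α) (o.trans' _ _ _ h hba)
  · simp only at he
    rw [he] at h3
    omega

end Aux3
section Aux4

variable {Q : Quiv} {k : Type} [Field k]

lemma mulF_single (p q : List Q.A) (c d : k) :
    mulF Q k (Finsupp.single p c) (Finsupp.single q d) = Finsupp.single (p ++ q) (c * d) := by
  rw [mulF, Finsupp.sum_single_index, Finsupp.sum_single_index]
  · simp
  · rw [Finsupp.sum_single_index] <;> simp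

lemma mulF_single_nil_one (f : List Q.A →₀ k) :
    mulF Q k f (Finsupp.single [] 1) = f := by
  rw [mulF]
  have h : ∀ p : List Q.A, ∀ c : k,
      (Finsupp.single ([] : List Q.A) (1 : k)).sum
        (fun q d => Finsupp.single (p ++ q) (c * d)) = Finsupp.single p c := by
    intro p c
    rw [Finsupp.sum_single_index (by simp)]
    simp
  rw [Finsupp.sum_congr (fun p _ => h p _)]
  exact Finsupp.sum_single f

lemma substPoly_nil (α : Q.A) (u : List Q.A) (τ : k) :
    substPoly Q k α u τ [] = Finsupp.single [] 1 := rfl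

lemma substPoly_cons (α : Q.A) (u : List Q.A) (τ : k) (b : Q.A) (t : List Q.A) :
    substPoly Q k α u τ (b :: t) =
      mulF Q k (arrowImg Q k α u τ b) (substPoly Q k α u τ t) := rfl

lemma substPoly_single_arrow (α : Q.A) (u : List Q.A) (τ : k) (b : Q.A) :
    substPoly Q k α u τ [b] = arrowImg Q k α u τ b := by
  rw [substPoly_cons, substPoly_nil, mulF_single_nil_one]

lemma substPoly_of_not_mem {α : Q.A} (u : List Q.A) (τ : k) {p : List Q.A}
    (hp : α ∉ p) : substPoly Q k α u τ p = Finsupp.single p 1 := by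
  induction p with
  | nil => rfl
  | cons b t ih =>
    have hb : b ≠ α := fun h => hp (by simp [h])
    have ht : α ∉ t := fun h => hp (by simp [h])
    rw [substPoly_cons, ih ht, arrowImg, if_neg hb, mulF_single]
    simp

lemma substMap_single_path (α : Q.A) (u : List Q.A) (τ : k) (p : List Q.A) :
    substMap Q k α u τ (Finsupp.single p 1) = substPoly Q k α u τ p := by
  rw [substMap, Finsupp.linearCombination_single, one_smul]

/-- Computation of the product of an increasing sequence of transvections on an
arrow. -/
lemma prod_transvections_apply (Q : Quiv) [Fintype Q.V] [Fintype Q.A]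
    (k : Type) [Field k] (hnc : Q.NoCycle) (hnm : Q.NoMultipleArrows)
    (o : Q.PathOrder) (a : ℕ → Q.A) (u : ℕ → List Q.A) (τ : ℕ → k) :
    ∀ (n : ℕ), (∀ i < n, Q.IsBypass (a i) (u i)) →
      (∀ i j, i < j → j < n → o.bplt (a i, u i) (a j, u j)) →
      ∀ α : Q.A,
        (((List.range n).map fun i => substMap Q k (a i) (u i) (τ i)).reverse).prod
            (Finsupp.single [α] (1 : k)) =
          Finsupp.single [α] 1 +
            ∑ i ∈ (Finset.range n).filter (fun i => a i = α),
              τ i • Finsupp.single (u i) 1 := by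
  intro n
  induction n with
  | zero =>
    intro _ _ α
    simp [Module.End.one_apply]
  | succ n ih =>
    intro hb hmono α
    have hb' : ∀ i < n, Q.IsBypass (a i) (u i) := fun i hi => hb i (by omega)
    have hmono' : ∀ i j, i < j → j < n → o.bplt (a i, u i) (a j, u j) :=
      fun i j h1 h2 => hmono i j h1 (by omega)
    have hstep : (((List.range (n+1)).map fun i => substMap Q k (a i) (u i) (τ i)).reverse).prod =
        substMap Q k (a n) (u n) (τ n) *
          (((List.range n).map fun i => substMap Q k (a i) (u i) (τ i)).reverse).prod := by
      rw [List.range_succ, List.map_append, List.reverse_append]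
      simp
    rw [hstep, Module.End.mul_apply, ih hb' hmono' α, map_add, map_sum]
    have hfix : ∀ i ∈ (Finset.range n).filter (fun i => a i = α),
        substMap Q k (a n) (u n) (τ n) (τ i • Finsupp.single (u i) 1) =
          τ i • Finsupp.single (u i) 1 := by
      intro i hi
      obtain ⟨hir, hia⟩ := Finset.mem_filter.1 hi
      have hin : i < n := Finset.mem_range.1 hir
      have hnotmem : a n ∉ u i :=
        key_notmem hnc hnm o (hb i (by omega)) (hb n (by omega))
          (hmono i n hin (by omega))
      rw [map_smul, substMap_single_path, substPoly_of_not_mem _ _ hnotmem]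
    rw [Finset.sum_congr rfl hfix]
    have harrow : substMap Q k (a n) (u n) (τ n) (Finsupp.single [α] (1 : k)) =
        arrowImg Q k (a n) (u n) (τ n) α := by
      rw [substMap_single_path, substPoly_single_arrow]
    rw [harrow, arrowImg]
    by_cases hc : a n = α
    · rw [if_pos hc.symm, Finset.range_add_one, Finset.filter_insert, if_pos hc,
        Finset.sum_insert (by simp)]
      rw [add_assoc]
    · rw [if_neg (fun h => hc h.symm), Finset.range_add_one, Finset.filter_insert,
        if_neg hc]

end Aux4
/-- Let `(α_1,u_1) < ⋯ < (α_n,u_n)` be a strictly increasing sequence of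
bypasses, let `τ_1,…,τ_n ∈ k^*`, and set `ψ := φ_{α_n,u_n,τ_n} ∘ ⋯ ∘ φ_{α_1,u_1,τ_1}`.
Then for every arrow `α`, `ψ(α) = α + Σ_{i, α_i = α} τ_i u_i`, and this expression is a
normal form: the paths `u_i` with `α_i = α` are pairwise distinct and distinct from `α`.
(Indices run over `0,…,n-1`.) -/
theorem stmt_10 (Q : Quiv) [Fintype Q.V] [Fintype Q.A]
    (k : Type) [Field k] [IsAlgClosed k]
    (hnc : Q.NoCycle) (hnm : Q.NoMultipleArrows) (o : Q.PathOrder)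
    (n : ℕ) (a : ℕ → Q.A) (u : ℕ → List Q.A) (τ : ℕ → k)
    (hb : ∀ i < n, Q.IsBypass (a i) (u i))
    (hτ : ∀ i < n, τ i ≠ 0)
    (hmono : ∀ i j, i < j → j < n → o.bplt (a i, u i) (a j, u j))
    (ψ : Module.End k (List Q.A →₀ k))
    (hψ : ψ = (((List.range n).map fun i => substMap Q k (a i) (u i) (τ i)).reverse).prod) :
    ∀ α : Q.A,
      ψ (Finsupp.single [α] (1 : k)) =
        Finsupp.single [α] 1 +
          ∑ i ∈ (Finset.range n).filter (fun i => a i = α),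
            τ i • Finsupp.single (u i) 1 ∧
      (∀ i j, i < n → j < n → a i = α → a j = α → i ≠ j → u i ≠ u j) ∧
      (∀ i < n, a i = α → u i ≠ [α]) := by
  intro α
  refine ⟨?_, ?_, ?_⟩
  · rw [hψ]
    exact prod_transvections_apply Q k hnc hnm o a u τ n hb hmono α
  · intro i j hi hj hai haj hne
    have key : ∀ i j, i < j → j < n → a i = α → a j = α → u i ≠ u j := by
      intro i j h1 h2 hai haj heq
      rcases hmono i j h1 h2 with h | ⟨_, hlt⟩
      · rw [hai, haj] at h
        exact o.irrefl [α] (isPath_single α) h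
      · rw [heq] at hlt
        exact o.irrefl (u j) (hb j h2).1 hlt
    rcases hne.lt_or_gt with h | h
    · exact key i j h hj hai haj
    · exact fun hc => key j i h hi haj hai hc.symm
  · intro i hi hai
    have := (hb i hi).2.2.2
    rw [hai] at this
    exact this

end Quiv
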